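/- Let n ≥ 1, 1 ≤ i ≤ n, k ≥ 0, and let P be a k-Rvalid vector of size n with exactly i nonempty entries. Then the number of elements of succ(P) having exactly i nonempty entries equals i^i. -/

import Mathlib

open Finset

/-- `Π·h`: the vector whose `q`-th entry is the union of the `Π p` over all `p` with `h p = q`. -/
def dotAct {n : ℕ} (Pi : Fin n → Finset ℕ) (h : Fin n → Fin n) : Fin n → Finset ℕ :=
  fun q => (Finset.univ.filter (fun p => h p = q)).biUnion Pi

/-- Entrywise union of two vectors of sets. -/
def vUnion {n : ℕ} (Pi Pi' : Fin n → Finset ℕ) : Fin n → Finset ℕ :=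
  fun q => Pi q ∪ Pi' q

/-- `r = max (π₀ ∪ … ∪ π_{n−1})`. -/
def vMax {n : ℕ} (Pi : Fin n → Finset ℕ) : ℕ :=
  (Finset.univ.sup Pi).sup id

/-- `Π↑`: add `r = max (π₀ ∪ … ∪ π_{n−1})` to every element of every entry. -/
def vUp {n : ℕ} (Pi : Fin n → Finset ℕ) : Fin n → Finset ℕ :=
  fun q => (Pi q).image (· + vMax Pi)

/-- A `k`-EXPcomposition of size `n`: pairwise disjoint entries whose union is `{1,…,2^k}`. -/
def IsEXP {n : ℕ} (k : ℕ) (Pi : Fin n → Finset ℕ) : Prop :=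
  (∀ p q : Fin n, p ≠ q → Disjoint (Pi p) (Pi q)) ∧
    Finset.univ.sup Pi = Finset.Icc 1 (2 ^ k)

/-- A `k`-Rvalid vector of size `n`. -/
def IsRvalid {n : ℕ} (k : ℕ) (ρ : Fin n → Finset ℕ) : Prop :=
  IsEXP k ρ ∧ (∀ p : Fin n, p.val = 0 → 1 ∈ ρ p) ∧
    ∀ k' < k, ∀ i ∈ Finset.Icc 1 (2 ^ k'), ∀ j ∈ Finset.Icc 1 (2 ^ k'),
      (∃ α, i ∈ ρ α ∧ j ∈ ρ α) → ∃ β, i + 2 ^ k' ∈ ρ β ∧ j + 2 ^ k' ∈ ρ β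

/-- A `k`-Lvalid vector of size `m`. -/
def IsLvalid {m : ℕ} (k : ℕ) (lam : Fin m → Finset ℕ) : Prop :=
  IsEXP k lam ∧ (∀ p : Fin m, p.val = 0 → 2 ^ k ∈ lam p) ∧
    ∀ k' < k, ∀ i ∈ Finset.Icc 1 (2 ^ k'), ∀ j ∈ Finset.Icc 1 (2 ^ k'),
      (∃ α, 2 ^ k + 1 - i ∈ lam α ∧ 2 ^ k + 1 - j ∈ lam α) →
        ∃ β, 2 ^ k + 1 - (i + 2 ^ k') ∈ lam β ∧ 2 ^ k + 1 - (j + 2 ^ k') ∈ lam β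

/-- Number of nonempty entries of a vector of sets. -/
def nne {n : ℕ} (Pi : Fin n → Finset ℕ) : ℕ :=
  (Finset.univ.filter (fun q => Pi q ≠ ∅)).card

/-- `succ(P) = {P ∪ (P·g)↑ : g}`. -/
def succSet {n : ℕ} (P : Fin n → Finset ℕ) : Finset (Fin n → Finset ℕ) :=
  (Finset.univ : Finset (Fin n → Fin n)).image (fun g => vUnion P (vUp (dotAct P g)))

/-- The graded set `U_{m,n}^{(k)}` of U-pairs. -/
def Uset (m n : ℕ) : ℕ → Set ((Fin m → Finset ℕ) × (Fin n → Finset ℕ))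
  | 0 => {x | x = (fun p => if p.val = 0 then {1} else ∅,
                   fun q => if q.val = 0 then {1} else ∅)}
  | k + 1 => {x | ∃ L P, (L, P) ∈ Uset m n k ∧ ∃ (f : Fin m → Fin m) (g : Fin n → Fin n),
      x = (vUnion (dotAct L f) (vUp L), vUnion P (vUp (dotAct P g)))}

/-- The `r`-Stirling number: partitions of `{1,…,a}` into `b` nonempty blocks
with `1,…,r` in pairwise distinct blocks. -/
noncomputable def rStirling (a b r : ℕ) : ℕ :=
  Set.ncard {C : Finset (Finset ℕ) |
    C.card = b ∧ (∅ ∉ C) ∧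
    (∀ B ∈ C, ∀ B' ∈ C, B ≠ B' → Disjoint B B') ∧
    C.sup id = Finset.Icc 1 a ∧
    ∀ x ∈ Finset.Icc 1 r, ∀ y ∈ Finset.Icc 1 r, x ≠ y →
      ∀ B ∈ C, x ∈ B → y ∉ B}

/-- The Stirling number of the second kind: the number of partitions of an
`a`-element set into `b` nonempty blocks. -/
noncomputable def stirling2 (a b : ℕ) : ℕ := rStirling a b 0

/-- The entry `s_n^{(i,j)}` (with `1 ≤ i,j ≤ n`). -/
noncomputable def sEntry (n i j : ℕ) : ℕ :=
  if i ≤ j then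
    (j - i).factorial * Nat.choose (n - i) (j - i) *
      ∑ α ∈ Finset.Icc (j - i) i, Nat.choose i α * i ^ (i - α) * stirling2 α (j - i)
  else 0

/-- The matrix `S_n`, with rows and columns indexed by `{1,…,n}`. -/
noncomputable def Smat (n : ℕ) : Matrix (Fin n) (Fin n) ℕ :=
  fun i j => sEntry n (i.val + 1) (j.val + 1)

/-- One step of the shuffle-automaton action on subsets of the grid. -/
def stepE {m n : ℕ} (E : Finset (Fin m × Fin n)) (f : Fin m → Fin m) (g : Fin n → Fin n) :
    Finset (Fin m × Fin n) :=
  E.image (fun p => (f p.1, p.2)) ∪ E.image (fun p => (p.1, g p.2))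

/-- Reachability from `{(0,0)}` by finitely many steps. -/
def Reach {m n : ℕ} (hm : 0 < m) (hn : 0 < n) (E : Finset (Fin m × Fin n)) : Prop :=
  Relation.ReflTransGen (fun E1 E2 => ∃ f g, E2 = stepE E1 f g)
    {(⟨0, hm⟩, ⟨0, hn⟩)} E

/-- Reachability from `{(0,0)}` in at most `t` steps. -/
def ReachIn {m n : ℕ} (hm : 0 < m) (hn : 0 < n) :
    ℕ → Finset (Fin m × Fin n) → Prop
  | 0, E => E = {(⟨0, hm⟩, ⟨0, hn⟩)}
  | t + 1, E => ReachIn hm hn t E ∨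
      ∃ E' f g, ReachIn hm hn t E' ∧ E = stepE E' f g

/-- `s(Λ,P) = {(i,j) : λ_i ∩ ρ_j ≠ ∅}`. -/
def sTab {m n : ℕ} (L : Fin m → Finset ℕ) (P : Fin n → Finset ℕ) :
    Finset (Fin m × Fin n) :=
  Finset.univ.filter (fun p => (L p.1 ∩ P p.2).Nonempty)

theorem stmt8 (n k i : ℕ) (hn : 1 ≤ n) (hi1 : 1 ≤ i) (hin : i ≤ n)
    (P : Fin n → Finset ℕ) (hP : IsRvalid k P) (hc : nne P = i) :
    ((succSet P).filter (fun Q => nne Q = i)).card = i ^ i := by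
  classical
  obtain ⟨⟨hdisj, hsup⟩, hone, -⟩ := hP
  set r := 2 ^ k with hrdef
  have hr1 : 1 ≤ r := Nat.one_le_two_pow
  have hmemP : ∀ p : Fin n, ∀ x ∈ P p, 1 ≤ x ∧ x ≤ r := by
    intro p x hx
    have hx' : x ∈ Finset.Icc 1 r := by
      rw [← hsup]; exact Finset.mem_sup.mpr ⟨p, Finset.mem_univ p, hx⟩
    exact Finset.mem_Icc.mp hx'
  have hsupd : ∀ g : Fin n → Fin n, Finset.univ.sup (dotAct P g) = Finset.univ.sup P := by
    intro g
    ext x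
    simp only [Finset.mem_sup, dotAct, Finset.mem_biUnion, Finset.mem_filter, Finset.mem_univ,
      true_and]
    constructor
    · rintro ⟨q, p, hpq, hx⟩; exact ⟨p, hx⟩
    · rintro ⟨p, hx⟩; exact ⟨g p, p, rfl, hx⟩
  have hIccsup : (Finset.Icc 1 r).sup id = r := by
    apply le_antisymm
    · exact Finset.sup_le fun x hx => (Finset.mem_Icc.mp hx).2
    · exact Finset.le_sup (f := id) (Finset.mem_Icc.mpr ⟨hr1, le_refl r⟩)
  have hvmax : ∀ g : Fin n → Fin n, vMax (dotAct P g) = r := by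
    intro g; rw [vMax, hsupd, hsup, hIccsup]
  set S : Finset (Fin n) := Finset.univ.filter (fun q => P q ≠ ∅) with hSdef
  have hnne_eq : ∀ Q : Fin n → Finset ℕ,
      nne Q = (Finset.univ.filter (fun q => Q q ≠ ∅)).card := fun Q => by
    simp [nne]
  have hScard : S.card = i := by rw [← hc, hnne_eq]
  -- membership in an entry of a successor
  have hmemF : ∀ (g : Fin n → Fin n) (q : Fin n) (x : ℕ),
      x ∈ vUnion P (vUp (dotAct P g)) q ↔
        x ∈ P q ∨ ∃ p, g p = q ∧ ∃ y ∈ P p, y + r = x := by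
    intro g q x
    simp only [vUnion, vUp, hvmax, Finset.mem_union, Finset.mem_image, dotAct,
      Finset.mem_biUnion, Finset.mem_filter, Finset.mem_univ, true_and]
    constructor
    · rintro (h | ⟨y, ⟨p, hpq, hy⟩, hyx⟩)
      · exact Or.inl h
      · exact Or.inr ⟨p, hpq, y, hy, hyx⟩
    · rintro (h | ⟨p, hpq, y, hy, hyx⟩)
      · exact Or.inl h
      · exact Or.inr ⟨y, ⟨p, hpq, hy⟩, hyx⟩
  have hchar : ∀ (g : Fin n → Fin n) (p q : Fin n) (x : ℕ), x ∈ P p →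
      (x + r ∈ vUnion P (vUp (dotAct P g)) q ↔ g p = q) := by
    intro g p q x hx
    obtain ⟨hx1, hxr⟩ := hmemP p x hx
    rw [hmemF]
    constructor
    · rintro (h | ⟨p', hp', y, hy, hyx⟩)
      · exact absurd (hmemP q _ h).2 (by omega)
      · have hyx' : y = x := by omega
        subst hyx'
        have hpp : p' = p := by
          by_contra hne
          exact (Finset.disjoint_left.mp (hdisj p' p hne) hy) hx
        rwa [hpp] at hp'
    · intro h
      exact Or.inr ⟨p, h, x, hx, rfl⟩
  have hFne : ∀ (g : Fin n → Fin n) (q : Fin n),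
      vUnion P (vUp (dotAct P g)) q ≠ ∅ ↔ (P q ≠ ∅ ∨ ∃ p, g p = q ∧ P p ≠ ∅) := by
    intro g q
    constructor
    · intro h
      obtain ⟨x, hx⟩ := Finset.nonempty_iff_ne_empty.mpr h
      rcases (hmemF g q x).mp hx with h' | ⟨p, hp, y, hy, -⟩
      · exact Or.inl (Finset.nonempty_iff_ne_empty.mp ⟨x, h'⟩)
      · exact Or.inr ⟨p, hp, Finset.nonempty_iff_ne_empty.mp ⟨y, hy⟩⟩
    · rintro (h | ⟨p, hp, hne⟩)
      · obtain ⟨x, hx⟩ := Finset.nonempty_iff_ne_empty.mpr h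
        exact Finset.nonempty_iff_ne_empty.mp ⟨x, (hmemF g q x).mpr (Or.inl hx)⟩
      · obtain ⟨x, hx⟩ := Finset.nonempty_iff_ne_empty.mpr hne
        exact Finset.nonempty_iff_ne_empty.mp
          ⟨x + r, (hmemF g q (x + r)).mpr (Or.inr ⟨p, hp, x, hx, rfl⟩)⟩
  have hSsub : ∀ g : Fin n → Fin n,
      S ⊆ Finset.univ.filter (fun q => vUnion P (vUp (dotAct P g)) q ≠ ∅) := by
    intro g q hq
    rw [hSdef, Finset.mem_filter] at hq
    exact Finset.mem_filter.mpr ⟨Finset.mem_univ q, (hFne g q).mpr (Or.inl hq.2)⟩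
  have hnneF : ∀ g : Fin n → Fin n,
      nne (vUnion P (vUp (dotAct P g))) = i ↔ ∀ p ∈ S, g p ∈ S := by
    intro g
    constructor
    · intro h
      have heq : S = Finset.univ.filter (fun q => vUnion P (vUp (dotAct P g)) q ≠ ∅) := by
        apply Finset.eq_of_subset_of_card_le (hSsub g)
        rw [← hnne_eq, h, hScard]
      intro p hp
      have hp' : P p ≠ ∅ := (Finset.mem_filter.mp hp).2
      rw [heq, Finset.mem_filter]
      exact ⟨Finset.mem_univ _, (hFne g (g p)).mpr (Or.inr ⟨p, rfl, hp'⟩)⟩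
    · intro h
      have heq : Finset.univ.filter (fun q => vUnion P (vUp (dotAct P g)) q ≠ ∅) = S := by
        apply Finset.Subset.antisymm _ (hSsub g)
        intro q hq
        rw [Finset.mem_filter] at hq
        rcases (hFne g q).mp hq.2 with h' | ⟨p, hp, hne⟩
        · exact Finset.mem_filter.mpr ⟨Finset.mem_univ q, h'⟩
        · subst hp
          exact h p (Finset.mem_filter.mpr ⟨Finset.mem_univ p, hne⟩)
      rw [hnne_eq, heq, hScard]
  set T : Finset (Fin n → Fin n) :=
    Finset.univ.filter (fun g => (∀ p ∈ S, g p ∈ S) ∧ ∀ p ∉ S, g p = p) with hTdef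
  have hinj : Set.InjOn (fun g => vUnion P (vUp (dotAct P g))) ↑T := by
    intro g hg g' hg' hgg
    simp only [hTdef, Finset.coe_filter, Set.mem_setOf_eq] at hg hg'
    funext p
    by_cases hp : p ∈ S
    · obtain ⟨x, hx⟩ : ∃ x, x ∈ P p :=
        Finset.nonempty_iff_ne_empty.mpr (Finset.mem_filter.mp hp).2
      have h1 : x + r ∈ vUnion P (vUp (dotAct P g)) (g p) := (hchar g p (g p) x hx).mpr rfl
      have hgg' : vUnion P (vUp (dotAct P g)) = vUnion P (vUp (dotAct P g')) := hgg
      rw [hgg'] at h1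
      exact ((hchar g' p (g p) x hx).mp h1).symm
    · rw [hg.2.2 p hp, hg'.2.2 p hp]
  have himg : (succSet P).filter (fun Q => nne Q = i) =
      T.image (fun g => vUnion P (vUp (dotAct P g))) := by
    ext Q
    simp only [Finset.mem_filter, Finset.mem_image, succSet, Finset.mem_image, Finset.mem_univ,
      true_and]
    constructor
    · rintro ⟨⟨g', rfl⟩, hnne⟩
      have hmap : ∀ p ∈ S, g' p ∈ S := (hnneF g').mp hnne
      refine ⟨fun p => if p ∈ S then g' p else p,
        Finset.mem_filter.mpr ⟨Finset.mem_univ _, ?_, ?_⟩, ?_⟩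
      · intro p hp; simpa [hp] using hmap p hp
      · intro p hp; simp [hp]
      · have hagree : ∀ p : Fin n, P p ≠ ∅ → (if p ∈ S then g' p else p) = g' p := by
          intro p hp
          simp [hSdef, Finset.mem_filter, hp]
        funext q
        ext x
        rw [hmemF, hmemF]
        constructor
        · rintro (h | ⟨p, hpq, y, hy, hyx⟩)
          · exact Or.inl h
          · have hpne : P p ≠ ∅ := Finset.nonempty_iff_ne_empty.mp ⟨y, hy⟩
            exact Or.inr ⟨p, (hagree p hpne) ▸ hpq, y, hy, hyx⟩
        · rintro (h | ⟨p, hpq, y, hy, hyx⟩)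
          · exact Or.inl h
          · have hpne : P p ≠ ∅ := Finset.nonempty_iff_ne_empty.mp ⟨y, hy⟩
            exact Or.inr ⟨p, (hagree p hpne).symm ▸ hpq, y, hy, hyx⟩
    · rintro ⟨g, hg, rfl⟩
      have hg' := (Finset.mem_filter.mp hg).2
      exact ⟨⟨g, rfl⟩, (hnneF g).mpr hg'.1⟩
  rw [himg, Finset.card_image_of_injOn hinj]
  have hTcard : T.card = (Finset.univ : Finset (↥S → ↥S)).card := by
    apply Finset.card_nbij'
      (i := fun g => fun p : ↥S => if h : g p.1 ∈ S then (⟨g p.1, h⟩ : ↥S) else p)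
      (j := fun φ => fun p => if h : p ∈ S then (φ ⟨p, h⟩ : Fin n) else p)
    · intro g _; exact Finset.mem_univ _
    · intro φ _
      refine Finset.mem_filter.mpr ⟨Finset.mem_univ _, ?_, ?_⟩
      · intro p hp
        simp only [dif_pos hp]
        exact (φ ⟨p, hp⟩).2
      · intro p hp; simp [hp]
    · intro g hg
      have hg' := (Finset.mem_filter.mp hg).2
      funext p
      by_cases hp : p ∈ S
      · simp only [dif_pos hp, dif_pos (hg'.1 p hp)]
      · simp [hp, hg'.2 p hp]
    · intro φ _
      funext p
      simp only [dif_pos p.2]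
      rw [dif_pos (φ ⟨p.1, p.2⟩).2]
  rw [hTcard, Finset.card_univ, Fintype.card_fun, Fintype.card_coe, hScard]
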